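/- Let the coarse nodes be τ₁ = 1/2, τ₂ = 1 and the fine nodes σ₁ = 1/3, σ₂ = 2/3, σ₃ = 1. Let ℓ₁(t) = (t − 1)/(1/2 − 1) and ℓ₂(t) = (t − 1/2)/(1 − 1/2) be the Lagrange basis polynomials at the coarse nodes, and define the 3×2 interpolation matrix I by I_{m,j} = ℓ_j(σ_m), so that I = [[4/3, −1/3], [2/3, 1/3], [0, 1]]. Let R = Iᵗ be the 2×3 restriction matrix, and let C₃ and C₂ be the 3×3 and 2×2 lower-triangular matrices of ones. Then R·C₃ ≠ C₂·R. In particular, the commutation condition R C^{0n}_{l+1} = C^{0n}_l R, which is necessary for the equivalence of the incremental and non-incremental MLSDC formulations, fails; hence the incremental and non-incremental MLSDC formulations are not equivalent. -/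
import Mathlib


/-- For coarse nodes `(1/2, 1)` and fine nodes `(1/3, 2/3, 1)`, the Lagrange interpolation
matrix is `I = [[4/3, −1/3], [2/3, 1/3], [0, 1]]`, and with `R = Iᵗ` the commutation
condition `R C₃ = C₂ R` fails: the incremental and non-incremental MLSDC formulations
are not equivalent. -/
theorem mlsdc_commutation_fails :
    let σ : Fin 3 → ℝ := ![1/3, 2/3, 1]
    let ℓ : Fin 2 → ℝ → ℝ :=
      ![fun t => (t - 1) / (1/2 - 1), fun t => (t - 1/2) / (1 - 1/2)]
    let I : Matrix (Fin 3) (Fin 2) ℝ := Matrix.of fun m j => ℓ j (σ m)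
    let R : Matrix (Fin 2) (Fin 3) ℝ := I.transpose
    let C₃ : Matrix (Fin 3) (Fin 3) ℝ := !![1, 0, 0; 1, 1, 0; 1, 1, 1]
    let C₂ : Matrix (Fin 2) (Fin 2) ℝ := !![1, 0; 1, 1]
    I = !![4/3, -1/3; 2/3, 1/3; 0, 1] ∧ R * C₃ ≠ C₂ * R := by
  intro σ ℓ I R C₃ C₂
  have hI : I = !![4/3, -1/3; 2/3, 1/3; 0, 1] := by
    ext m j
    fin_cases m <;> fin_cases j <;>
      simp [I, ℓ, σ, Matrix.of_apply] <;> norm_num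
  refine ⟨hI, ?_⟩
  intro h
  have h00 := congrFun (congrFun h 0) 0
  simp [R, I, ℓ, σ, C₃, C₂, Matrix.mul_apply, Fin.sum_univ_succ, Matrix.transpose_apply] at h00
  norm_num at h00
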